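/- Let A ⊂ ℝⁿ be a closed set with A = -A and 0 ∉ A. Then the distortion of A is at least π/2. -/

import Mathlib

open Set ENNReal RealInnerProductSpace

noncomputable def intrinsicDist {n : ℕ} (A : Set (EuclideanSpace ℝ (Fin n)))
    (p q : EuclideanSpace ℝ (Fin n)) : ℝ≥0∞ :=
  ⨅ (γ : Path p q) (_ : Set.range γ ⊆ A), eVariationOn (fun t => γ t) Set.univ

noncomputable def distortion {n : ℕ} (A : Set (EuclideanSpace ℝ (Fin n))) : ℝ≥0∞ :=
  ⨆ p ∈ A, ⨆ q ∈ A, intrinsicDist A p q / edist p q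

section Aux

open Real InnerProductGeometry

variable {V : Type*} [NormedAddCommGroup V] [InnerProductSpace ℝ V]

lemma angle_triangle_unit {u v w : V} (hu : ‖u‖ = 1) (hv : ‖v‖ = 1) (hw : ‖w‖ = 1) :
    angle u w ≤ angle u v + angle v w := by
  by_cases hπ : π ≤ angle u v + angle v w
  · exact (angle_le_pi u w).trans hπ
  push_neg at hπ
  set α := angle u v with hα
  set β := angle v w with hβ
  have hs : ⟪u, v⟫ = Real.cos α := by
    rw [hα, cos_angle, hu, hv]; ring
  have ht : ⟪w, v⟫ = Real.cos β := by
    rw [hβ, cos_angle, hw, hv, real_inner_comm]; ring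
  set a := u - ⟪u, v⟫ • v with ha
  set b := w - ⟪w, v⟫ • v with hb
  have hna : ‖a‖ = Real.sin α := by
    have h1 : ‖a‖ ^ 2 = Real.sin α ^ 2 := by
      rw [ha, norm_sub_sq_real]
      simp [norm_smul, real_inner_smul_right, hv, hu, hs, Real.sin_sq]
      ring
    have := Real.sin_nonneg_of_nonneg_of_le_pi (angle_nonneg u v) (angle_le_pi u v)
    nlinarith [norm_nonneg a]
  have hnb : ‖b‖ = Real.sin β := by
    have h1 : ‖b‖ ^ 2 = Real.sin β ^ 2 := by
      rw [hb, norm_sub_sq_real]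
      simp [norm_smul, real_inner_smul_right, hv, hw, ht, Real.sin_sq]
      ring
    have := Real.sin_nonneg_of_nonneg_of_le_pi (angle_nonneg v w) (angle_le_pi v w)
    nlinarith [norm_nonneg b]
  have c1 : ⟪v, u⟫ = Real.cos α := (real_inner_comm u v).trans hs
  have c2 : ⟪v, w⟫ = Real.cos β := (real_inner_comm w v).trans ht
  have hab : ⟪a, b⟫ = ⟪u, w⟫ - Real.cos α * Real.cos β := by
    rw [ha, hb]
    simp only [inner_sub_left, inner_sub_right, real_inner_smul_left,
      real_inner_smul_right, real_inner_self_eq_norm_sq, hv]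
    simp only [hs, ht, c1, c2]
    ring
  have hCS : -(‖a‖ * ‖b‖) ≤ ⟪a, b⟫ := neg_abs_le _ |>.trans' (by
    have := abs_real_inner_le_norm a b
    linarith [neg_le_neg this])
  have hkey : Real.cos (α + β) ≤ ⟪u, w⟫ := by
    rw [Real.cos_add]
    rw [hna, hnb, hab] at hCS
    linarith
  have hcosuw : Real.cos (angle u w) = ⟪u, w⟫ := by
    rw [cos_angle, hu, hw]; ring
  have h0 : 0 ≤ α + β := add_nonneg (angle_nonneg u v) (angle_nonneg v w)
  have h2 := (Real.strictAntiOn_cos.le_iff_ge ⟨h0, hπ.le⟩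
    ⟨angle_nonneg u w, angle_le_pi u w⟩)
  rw [hcosuw] at h2
  exact h2.1 hkey

lemma angle_triangle' {x y z : V} (hx : x ≠ 0) (hy : y ≠ 0) (hz : z ≠ 0) :
    angle x z ≤ angle x y + angle y z := by
  have nx : (0:ℝ) < ‖x‖ := norm_pos_iff.2 hx
  have ny : (0:ℝ) < ‖y‖ := norm_pos_iff.2 hy
  have nz : (0:ℝ) < ‖z‖ := norm_pos_iff.2 hz
  have h1 : angle (‖x‖⁻¹ • x) (‖z‖⁻¹ • z) = angle x z := by
    rw [angle_smul_left_of_pos _ _ (inv_pos.2 nx), angle_smul_right_of_pos _ _ (inv_pos.2 nz)]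
  have h2 : angle (‖x‖⁻¹ • x) (‖y‖⁻¹ • y) = angle x y := by
    rw [angle_smul_left_of_pos _ _ (inv_pos.2 nx), angle_smul_right_of_pos _ _ (inv_pos.2 ny)]
  have h3 : angle (‖y‖⁻¹ • y) (‖z‖⁻¹ • z) = angle y z := by
    rw [angle_smul_left_of_pos _ _ (inv_pos.2 ny), angle_smul_right_of_pos _ _ (inv_pos.2 nz)]
  rw [← h1, ← h2, ← h3]
  exact angle_triangle_unit (norm_smul_inv_norm hx) (norm_smul_inv_norm hy)
    (norm_smul_inv_norm hz)

lemma angle_chain (f : ℕ → V) (hf : ∀ i, f i ≠ 0) (m : ℕ) :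
    angle (f 0) (f m) ≤ ∑ i ∈ Finset.range m, angle (f i) (f (i + 1)) := by
  induction m with
  | zero => simp [angle_self (hf 0)]
  | succ m ih =>
    rw [Finset.sum_range_succ]
    calc angle (f 0) (f (m + 1)) ≤ angle (f 0) (f m) + angle (f m) (f (m + 1)) :=
          angle_triangle' (hf 0) (hf m) (hf (m + 1))
      _ ≤ _ := by linarith

lemma chord_ge {r : ℝ} (hr : 0 < r) {x y : V} (hx : r ≤ ‖x‖) (hy : r ≤ ‖y‖) :
    2 * r * Real.sin (angle x y / 2) ≤ ‖x - y‖ := by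
  have hθ0 := angle_nonneg x y
  have hθπ := angle_le_pi x y
  have hsin : 0 ≤ Real.sin (angle x y / 2) :=
    Real.sin_nonneg_of_nonneg_of_le_pi (by linarith) (by linarith [Real.pi_pos])
  have nx0 : ‖x‖ ≠ 0 := ne_of_gt (lt_of_lt_of_le hr hx)
  have ny0 : ‖y‖ ≠ 0 := ne_of_gt (lt_of_lt_of_le hr hy)
  have hinner : ⟪x, y⟫ = ‖x‖ * ‖y‖ * Real.cos (angle x y) := by
    rw [cos_angle]
    field_simp
  have hcos : Real.cos (angle x y) = 1 - 2 * Real.sin (angle x y / 2) ^ 2 := by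
    have h := Real.cos_two_mul' (angle x y / 2)
    have h2 := Real.sin_sq_add_cos_sq (angle x y / 2)
    rw [show 2 * (angle x y / 2) = angle x y by ring] at h
    linarith
  have hsq : (2 * r * Real.sin (angle x y / 2)) ^ 2 ≤ ‖x - y‖ ^ 2 := by
    rw [norm_sub_sq_real, hinner, hcos]
    have hab : r * r ≤ ‖x‖ * ‖y‖ := mul_le_mul hx hy hr.le (le_trans hr.le hx)
    nlinarith [sq_nonneg (‖x‖ - ‖y‖), sq_nonneg (Real.sin (angle x y / 2)), hab]
  nlinarith [norm_nonneg (x - y), mul_nonneg (mul_nonneg (by norm_num : (0:ℝ) ≤ 2) hr.le) hsin]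

lemma length_lb {r : ℝ} (hr : 0 < r) {p : V} (hp : ‖p‖ = r)
    (γ : Path p (-p)) (hγ : ∀ t, r ≤ ‖γ t‖) :
    ENNReal.ofReal (π * r) ≤ eVariationOn (fun t => γ t) Set.univ := by
  refine ENNReal.le_of_forall_pos_le_add fun ε hε hE => ?_
  have hη : 0 < (ε : ℝ) := hε
  have hπr : 0 < π * r := mul_pos Real.pi_pos hr
  set δ : ℝ := min 1 (Real.sqrt (16 * ε / (π * r))) with hδdef
  have hδ0 : 0 < δ := lt_min one_pos (Real.sqrt_pos.2 (by positivity))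
  have hδ1 : δ ≤ 1 := min_le_left _ _
  have hδη : π * r * (δ ^ 2 / 16) ≤ ε := by
    have h1 : δ ^ 2 ≤ 16 * ε / (π * r) := by
      have h2 : δ ≤ Real.sqrt (16 * ε / (π * r)) := min_le_right _ _
      have h3 := Real.sq_sqrt (show (0:ℝ) ≤ 16 * ε / (π * r) by positivity)
      nlinarith [Real.sqrt_nonneg (16 * ε / (π * r))]
    rw [le_div_iff₀ hπr] at h1
    nlinarith
  set ε₀ : ℝ := 2 * r * δ / π with hε₀def
  have hε₀ : 0 < ε₀ := by positivity
  have hUC : UniformContinuous γ := CompactSpace.uniformContinuous_of_continuous γ.continuous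
  obtain ⟨δ₀, hδ₀pos, H⟩ := Metric.uniformContinuous_iff.1 hUC ε₀ hε₀
  obtain ⟨m, hm⟩ := exists_nat_one_div_lt hδ₀pos
  set M : ℕ := m + 1 with hMdef
  have hM0 : (0:ℝ) < M := by positivity
  set u : ℕ → unitInterval := fun i => ⟨min ((i : ℝ) / M) 1,
    ⟨le_min (by positivity) zero_le_one, min_le_right _ _⟩⟩ with hudef
  have hu : Monotone u := by
    intro i j hij
    simp only [hudef, Subtype.mk_le_mk]
    exact min_le_min (div_le_div_of_nonneg_right (by exact_mod_cast hij) hM0.le) le_rfl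
  have hu0 : u 0 = 0 := by
    apply Subtype.ext
    show min ((0:ℕ) / (M:ℝ)) 1 = 0
    simp
  have huM : u M = 1 := by
    apply Subtype.ext
    show min ((M:ℕ) / (M:ℝ)) 1 = 1
    rw [div_self (ne_of_gt hM0)]
    simp
  have hstep : ∀ i : ℕ, dist (u (i + 1)) (u i) < δ₀ := by
    intro i
    have h1 : dist (u (i + 1)) (u i) = |min (((i:ℝ) + 1) / M) 1 - min ((i:ℝ) / M) 1| := by
      rw [Subtype.dist_eq, Real.dist_eq]
      push_cast [hudef]
      norm_num
    rw [h1, abs_of_nonneg (by apply sub_nonneg.2; exact min_le_min (by gcongr; linarith) le_rfl)]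
    have h2 : min (((i:ℝ) + 1) / M) 1 ≤ min ((i:ℝ) / M) 1 + 1 / M := by
      have e1 : ((i:ℝ) + 1) / M = (i:ℝ) / M + 1 / M := by ring
      have e2 : min ((i:ℝ) / M) 1 + 1 / M = min ((i:ℝ) / M + 1 / M) (1 + 1 / M) := by
        rw [min_add_add_right]
      rw [e1, e2]
      exact min_le_min le_rfl (by linarith [le_of_lt (div_pos one_pos hM0)])
    have : (1:ℝ) / M < δ₀ := by exact_mod_cast hm
    linarith
  set θ : ℕ → ℝ := fun i => angle (γ (u i)) (γ (u (i + 1))) with hθdef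
  have hnz : ∀ t, γ t ≠ 0 := fun t => by
    intro h; have := hγ t; rw [h, norm_zero] at this; linarith
  have hθ0 : ∀ i, 0 ≤ θ i := fun i => angle_nonneg _ _
  have hθπ : ∀ i, θ i ≤ π := fun i => angle_le_pi _ _
  have hchord : ∀ i, 2 * r * Real.sin (θ i / 2) ≤ dist (γ (u (i+1))) (γ (u i)) := by
    intro i
    rw [dist_eq_norm]
    have := chord_ge hr (hγ (u (i+1))) (hγ (u i))
    rwa [angle_comm] at this
  have hθδ : ∀ i, θ i < δ := by
    intro i
    have h1 := hchord i
    have h2 := H (hstep i)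
    have h3 : 2 / π * (θ i / 2) ≤ Real.sin (θ i / 2) :=
      Real.mul_le_sin (by linarith [hθ0 i]) (by linarith [hθπ i])
    have hπ0 := Real.pi_pos
    rw [hε₀def] at h2
    have h4 : 2 * r * θ i / π < 2 * r * δ / π := by
      calc 2 * r * θ i / π = 2 * r * (2 / π * (θ i / 2)) := by ring
        _ ≤ 2 * r * Real.sin (θ i / 2) := by
            apply mul_le_mul_of_nonneg_left h3 (by positivity)
        _ ≤ dist (γ (u (i+1))) (γ (u i)) := h1
        _ < 2 * r * δ / π := h2
    have h5 : 2 * r * θ i < 2 * r * δ := (div_lt_div_iff_of_pos_right hπ0).1 h4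
    have h2r : (0:ℝ) < 2 * r := by linarith
    exact lt_of_mul_lt_mul_left h5 h2r.le
  have hlb : ∀ i, r * (1 - δ ^ 2 / 16) * θ i ≤ dist (γ (u (i+1))) (γ (u i)) := by
    intro i
    refine le_trans ?_ (hchord i)
    rcases eq_or_lt_of_le (hθ0 i) with h | h
    · rw [← h]; simp
    · have h1 : θ i / 2 ≤ 1 := by linarith [hθδ i]
      have h2 := Real.sin_gt_sub_cube (by linarith : 0 < θ i / 2)
      have h3 : θ i ≤ δ := (hθδ i).le
      have hθ2 : θ i ^ 2 ≤ δ ^ 2 := by nlinarith [hθ0 i]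
      have hint : 0 ≤ r * θ i * (δ ^ 2 - θ i ^ 2) :=
        mul_nonneg (mul_nonneg hr.le (hθ0 i)) (sub_nonneg.2 hθ2)
      nlinarith [mul_le_mul_of_nonneg_left h2.le (by linarith : (0:ℝ) ≤ 2 * r),
        mul_nonneg (mul_nonneg hr.le (hθ0 i)) (sq_nonneg δ)]
  have hsumθ : π ≤ ∑ i ∈ Finset.range M, θ i := by
    have hp0 : p ≠ 0 := fun h => by rw [h, norm_zero] at hp; exact hr.ne' hp.symm
    have h1 : angle (γ (u 0)) (γ (u M)) = π := by
      rw [hu0, huM, γ.source, γ.target, angle_neg_right, angle_self hp0, sub_zero]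
    rw [← h1]
    exact angle_chain (fun i => γ (u i)) (fun i => hnz (u i)) M
  have hsum : π * r - ε ≤ ∑ i ∈ Finset.range M, dist (γ (u (i+1))) (γ (u i)) := by
    have h1 : ∑ i ∈ Finset.range M, r * (1 - δ ^ 2 / 16) * θ i ≤
        ∑ i ∈ Finset.range M, dist (γ (u (i+1))) (γ (u i)) :=
      Finset.sum_le_sum fun i _ => hlb i
    have h2 : r * (1 - δ ^ 2 / 16) * π ≤ ∑ i ∈ Finset.range M, r * (1 - δ ^ 2 / 16) * θ i := by
      rw [← Finset.mul_sum]
      have hc : 0 ≤ r * (1 - δ ^ 2 / 16) := by nlinarith [mul_le_mul hδ1 hδ1 hδ0.le zero_le_one]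
      exact mul_le_mul_of_nonneg_left hsumθ hc
    nlinarith
  have hS := eVariationOn.sum_le (f := fun t => γ t) (n := M) hu (fun i => Set.mem_univ _)
  have hEsum : ENNReal.ofReal (π * r - ε) ≤ eVariationOn (fun t => γ t) Set.univ := by
    refine le_trans ?_ hS
    have : ∑ i ∈ Finset.range M, edist ((fun t => γ t) (u (i+1))) ((fun t => γ t) (u i)) =
        ENNReal.ofReal (∑ i ∈ Finset.range M, dist (γ (u (i+1))) (γ (u i))) := by
      rw [ENNReal.ofReal_sum_of_nonneg fun i _ => dist_nonneg]
      exact Finset.sum_congr rfl fun i _ => edist_dist _ _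
    rw [this]
    exact ENNReal.ofReal_le_ofReal hsum
  calc ENNReal.ofReal (π * r) = ENNReal.ofReal ((π * r - ε) + ε) := by norm_num
    _ ≤ ENNReal.ofReal (π * r - ε) + ENNReal.ofReal ε := ENNReal.ofReal_add_le
    _ ≤ eVariationOn (fun t => γ t) Set.univ + ε := by
        gcongr
        exact le_of_eq ENNReal.ofReal_coe_nnreal

end Aux

theorem stmt7 {n : ℕ} (A : Set (EuclideanSpace ℝ (Fin n))) (hA : IsClosed A)
    (hne : A.Nonempty) (hsym : -A = A) (h0 : (0 : EuclideanSpace ℝ (Fin n)) ∉ A) :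
    ENNReal.ofReal (Real.pi / 2) ≤ distortion A := by
  obtain ⟨a, ha⟩ := hne
  have hK : IsCompact (A ∩ Metric.closedBall 0 ‖a‖) :=
    (isCompact_closedBall 0 ‖a‖).inter_left hA
  have hKne : (A ∩ Metric.closedBall 0 ‖a‖).Nonempty :=
    ⟨a, ha, by simp [Metric.mem_closedBall, dist_zero_right]⟩
  obtain ⟨p, hpK, hpmin⟩ := hK.exists_isMinOn hKne continuous_norm.continuousOn
  have hp : p ∈ A := hpK.1
  have hmin : ∀ x ∈ A, ‖p‖ ≤ ‖x‖ := by
    intro x hx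
    by_cases hxb : ‖x‖ ≤ ‖a‖
    · exact hpmin ⟨hx, by simp [Metric.mem_closedBall, dist_zero_right, hxb]⟩
    · have h1 : ‖p‖ ≤ ‖a‖ := hpmin ⟨ha, by simp [Metric.mem_closedBall, dist_zero_right]⟩
      linarith
  have hp0 : p ≠ 0 := fun h => h0 (h ▸ hp)
  have hr : 0 < ‖p‖ := norm_pos_iff.2 hp0
  have hnegp : -p ∈ A := by
    rw [← hsym, Set.mem_neg, neg_neg]; exact hp
  have hID : ENNReal.ofReal (Real.pi * ‖p‖) ≤ intrinsicDist A p (-p) := by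
    refine le_iInf fun γ => le_iInf fun hγA => ?_
    exact length_lb hr rfl γ fun t => hmin _ (hγA (Set.mem_range_self t))
  have hedist : edist p (-p) = ENNReal.ofReal (2 * ‖p‖) := by
    rw [edist_dist, dist_eq_norm, sub_neg_eq_add, ← two_smul ℝ p, norm_smul]
    norm_num
  have hdiv : ENNReal.ofReal (Real.pi / 2) ≤ intrinsicDist A p (-p) / edist p (-p) := by
    rw [hedist]
    have h1 : ENNReal.ofReal (Real.pi / 2) = ENNReal.ofReal (Real.pi * ‖p‖) / ENNReal.ofReal (2 * ‖p‖) := by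
      rw [← ENNReal.ofReal_div_of_pos (by positivity)]
      congr 1
      field_simp
    rw [h1]
    gcongr
  calc ENNReal.ofReal (Real.pi / 2) ≤ intrinsicDist A p (-p) / edist p (-p) := hdiv
    _ ≤ ⨆ q ∈ A, intrinsicDist A p q / edist p q := le_biSup (fun q => intrinsicDist A p q / edist p q) hnegp
    _ ≤ distortion A := by
        unfold distortion
        exact le_biSup (fun x => ⨆ q ∈ A, intrinsicDist A x q / edist x q) hp
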